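/- Let n be a natural number with n ≥ 2 and let N₀ > 0 be a real number. Then ∫₀^∞ x^{n−2}·e^{−x/2} / ((x + N₀)·2^{n−1}·(n−2)!) dx = e^{N₀/2} · 2^{1−n} · N₀^{n−2} · ∫_{N₀/2}^∞ t^{1−n}·e^{−t} dt. -/

import Mathlib

open MeasureTheory Set Real Filter

private lemma aux_tendsto (k : ℕ) :
    Tendsto (fun x : ℝ => x ^ k * Real.exp (-(4⁻¹ * x))) atTop (nhds 0) := by
  have h := ((tendsto_pow_mul_exp_neg_atTop_nhds_zero k).comp
    (tendsto_id.atTop_div_const (by norm_num : (0:ℝ) < 4))).const_mul ((4:ℝ) ^ k)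
  rw [mul_zero] at h
  refine h.congr (fun x => ?_)
  simp only [Function.comp, id]
  rw [div_pow]
  have h4 : ((4:ℝ) ^ k) ≠ 0 := by positivity
  field_simp

private lemma intA (k : ℕ) :
    IntegrableOn (fun x : ℝ => x ^ k * Real.exp (-x / 2)) (Ioi 0) := by
  apply integrable_of_isBigO_exp_neg (by norm_num : (0:ℝ) < 4⁻¹)
  · exact ((continuous_pow k).mul (Real.continuous_exp.comp (by continuity))).continuousOn
  · refine (Asymptotics.isLittleO_of_tendsto
      (fun x hx => absurd hx (Real.exp_ne_zero _)) ?_).isBigO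
    refine (aux_tendsto k).congr (fun x => ?_)
    rw [mul_div_assoc, ← Real.exp_sub]
    congr 1
    ring

private lemma intB (k : ℕ) :
    ∫ x in Ioi (0:ℝ), x ^ k * Real.exp (-x / 2)
      = 2 ^ (k + 1) * (Nat.factorial k : ℝ) := by
  have h := Real.integral_rpow_mul_exp_neg_mul_Ioi
    (a := (k:ℝ) + 1) (r := 1/2) (by positivity) (by norm_num)
  rw [show ((k:ℝ) + 1 - 1) = (k:ℝ) by ring] at h
  rw [show ((1:ℝ)/(1/2)) = 2 by norm_num] at h
  have hg : Real.Gamma ((k:ℝ) + 1) = (Nat.factorial k : ℝ) := by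
    exact_mod_cast Real.Gamma_nat_eq_factorial k
  rw [hg] at h
  have h2 : (2:ℝ) ^ ((k:ℝ) + 1) = 2 ^ (k + 1) := by
    rw [show ((k:ℝ) + 1) = ((k + 1 : ℕ) : ℝ) by push_cast; ring, Real.rpow_natCast]
  rw [h2] at h
  rw [← h]
  refine setIntegral_congr_fun measurableSet_Ioi (fun x hx => ?_)
  rw [Real.rpow_natCast]
  congr 1
  ring

private lemma intL (k : ℕ) {N₀ : ℝ} (hN₀ : 0 < N₀) :
    IntegrableOn (fun x : ℝ => x ^ k * Real.exp (-x / 2) / (x + N₀)) (Ioi 0) := by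
  refine ((intA k).div_const N₀).mono' ?_ ?_
  · exact (((measurable_id.pow_const k).mul
      ((measurable_id.neg.div_const 2).exp)).div
      (measurable_id.add_const N₀)).aestronglyMeasurable
  · filter_upwards [ae_restrict_mem measurableSet_Ioi] with x hx
    have hx0 : (0:ℝ) < x := hx
    have hxn : (0:ℝ) < x + N₀ := by linarith
    rw [Real.norm_eq_abs, abs_of_nonneg (by positivity)]
    gcongr
    linarith

private lemma intG (m : ℕ) {a : ℝ} (ha : 0 < a) :
    IntegrableOn (fun t : ℝ => Real.exp (-t) / t ^ m) (Ioi a) := by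
  refine ((exp_neg_integrableOn_Ioi a one_pos).div_const (a ^ m)).mono' ?_ ?_
  · exact ((measurable_id.neg.exp).div (measurable_id.pow_const m)).aestronglyMeasurable
  · filter_upwards [ae_restrict_mem measurableSet_Ioi] with t ht
    have ht0 : a < t := ht
    have htp : (0:ℝ) < t := lt_trans ha ht0
    rw [Real.norm_eq_abs, abs_of_nonneg (by positivity), neg_one_mul]
    gcongr

private lemma G_rec (m : ℕ) (hm : 1 ≤ m) {a : ℝ} (ha : 0 < a) :
    ∫ t in Ioi a, Real.exp (-t) / t ^ m
      = Real.exp (-a) / a ^ m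
        - m * ∫ t in Ioi a, Real.exp (-t) / t ^ (m + 1) := by
  obtain ⟨j, rfl⟩ : ∃ j, m = j + 1 := ⟨m - 1, by omega⟩
  have key := integral_Ioi_of_hasDerivAt_of_tendsto'
    (f := fun t : ℝ => Real.exp (-t) / t ^ (j + 1))
    (f' := fun t : ℝ => -(Real.exp (-t) / t ^ (j + 1))
      - (j + 1) * (Real.exp (-t) / t ^ (j + 2)))
    (a := a) (m := 0)
    (fun x hx => by
      have hx0 : (0:ℝ) < x := lt_of_lt_of_le ha hx
      have h1 : HasDerivAt (fun t : ℝ => Real.exp (-t)) (-Real.exp (-x)) x := by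
        simpa using ((hasDerivAt_id x).neg.exp)
      have h2 : HasDerivAt (fun t : ℝ => t ^ (j + 1))
          (((j : ℝ) + 1) * x ^ j) x := by
        simpa using hasDerivAt_pow (j + 1) x
      have h := h1.div h2 (by positivity)
      refine h.congr_deriv ?_
      field_simp
      ring)
    (by
      refine (((intG (j + 1) ha).neg).sub
        (((intG (j + 2) ha).const_mul ((j:ℝ) + 1)))).congr
        (Filter.Eventually.of_forall (fun x => ?_))
      simp only [Pi.sub_apply, Pi.neg_apply])
    (by
      have h1 : Tendsto (fun t : ℝ => Real.exp (-t)) atTop (nhds 0) := by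
        simpa using Real.tendsto_exp_neg_atTop_nhds_zero
      have h2 : Tendsto (fun t : ℝ => ((t : ℝ) ^ (j + 1))⁻¹) atTop (nhds 0) :=
        (tendsto_pow_atTop (by omega)).inv_tendsto_atTop
      have := h1.mul h2
      rw [mul_zero] at this
      exact this.congr (fun t => by rw [div_eq_mul_inv]))
  have hsplit : ∫ t in Ioi a,
      (-(Real.exp (-t) / t ^ (j + 1)) - ((j:ℝ) + 1) * (Real.exp (-t) / t ^ (j + 2)))
      = -(∫ t in Ioi a, Real.exp (-t) / t ^ (j + 1))
        - ((j:ℝ) + 1) * ∫ t in Ioi a, Real.exp (-t) / t ^ (j + 2) := by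
    rw [← integral_const_mul, ← integral_neg, ← integral_sub]
    · exact (intG (j + 1) ha).neg
    · exact (intG (j + 2) ha).const_mul _
  rw [hsplit] at key
  push_cast
  linarith [key]

private lemma base {N₀ : ℝ} (hN₀ : 0 < N₀) :
    ∫ x in Ioi (0:ℝ), Real.exp (-x / 2) / (x + N₀)
      = Real.exp (N₀ / 2) * ∫ t in Ioi (N₀ / 2), Real.exp (-t) / t := by
  have himg : (fun x : ℝ => (x + N₀) / 2) '' Ioi 0 = Ioi (N₀ / 2) := by
    ext t
    constructor
    · rintro ⟨x, hx, rfl⟩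
      have hx0 : (0:ℝ) < x := hx
      exact mem_Ioi.2 (by linarith)
    · intro ht
      have ht0 : N₀ / 2 < t := ht
      exact ⟨2 * t - N₀, mem_Ioi.2 (by linarith), by ring⟩
  have hchg := integral_image_eq_integral_abs_deriv_smul (s := Ioi 0)
    measurableSet_Ioi
    (f := fun x : ℝ => (x + N₀) / 2) (f' := fun _ => (1:ℝ)/2)
    (fun x _ => (((hasDerivAt_id x).add_const N₀).div_const 2).hasDerivWithinAt)
    (fun x _ y _ h => by dsimp at h; linarith)
    (fun t => Real.exp (-t) / t)
  rw [himg] at hchg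
  rw [hchg, ← integral_const_mul]
  refine setIntegral_congr_fun measurableSet_Ioi (fun x hx => ?_)
  have hx0 : (0:ℝ) < x := hx
  have hxn : (0:ℝ) < x + N₀ := by linarith
  rw [smul_eq_mul, abs_of_pos (by norm_num : (0:ℝ) < 1/2)]
  have h1 : Real.exp (N₀ / 2) * Real.exp (-((x + N₀) / 2)) = Real.exp (-x / 2) := by
    rw [← Real.exp_add]; congr 1; ring
  have h2 : (1:ℝ)/2 * (Real.exp (-((x + N₀) / 2)) / ((x + N₀) / 2))
      = Real.exp (-((x + N₀) / 2)) / (x + N₀) := by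
    field_simp
  rw [h2, mul_div_assoc', h1]

private lemma main_lemma {N₀ : ℝ} (hN₀ : 0 < N₀) (k : ℕ) :
    ∫ x in Ioi (0:ℝ), x ^ k * Real.exp (-x / 2) / (x + N₀)
      = Real.exp (N₀ / 2) * (Nat.factorial k : ℝ) * N₀ ^ k *
          ∫ t in Ioi (N₀ / 2), Real.exp (-t) / t ^ (k + 1) := by
  induction k with
  | zero =>
      simpa using base hN₀
  | succ k ih =>
      have ha : (0:ℝ) < N₀ / 2 := by positivity
      have hrec := G_rec (k + 1) (by omega) ha
      have hsplit : ∫ x in Ioi (0:ℝ), x ^ (k + 1) * Real.exp (-x / 2) / (x + N₀)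
          = (∫ x in Ioi (0:ℝ), x ^ k * Real.exp (-x / 2))
            - N₀ * ∫ x in Ioi (0:ℝ), x ^ k * Real.exp (-x / 2) / (x + N₀) := by
        rw [← integral_const_mul, ← integral_sub (intA k) ((intL k hN₀).const_mul N₀)]
        refine setIntegral_congr_fun measurableSet_Ioi (fun x hx => ?_)
        have hx0 : (0:ℝ) < x := hx
        have hxn : x + N₀ ≠ 0 := by positivity
        field_simp
        ring
      rw [hsplit, intB k, ih, hrec, Real.exp_neg]
      have hfac : ((Nat.factorial (k + 1) : ℕ) : ℝ)
          = ((k:ℝ) + 1) * (Nat.factorial k : ℝ) := by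
        rw [Nat.factorial_succ]; push_cast; ring
      rw [hfac]
      have hE : Real.exp (N₀ / 2) ≠ 0 := Real.exp_ne_zero _
      have hN : N₀ ≠ 0 := hN₀.ne'
      field_simp
      push_cast
      rw [← mul_pow, show (2:ℝ) * (N₀ / 2) = N₀ by ring]
      ring

theorem stmt_7 (n : ℕ) (hn : 2 ≤ n) (N₀ : ℝ) (hN₀ : 0 < N₀) :
    ∫ x in Set.Ioi (0 : ℝ),
        x ^ (n - 2) * Real.exp (-x / 2) /
          ((x + N₀) * 2 ^ (n - 1) * (Nat.factorial (n - 2) : ℝ)) =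
      Real.exp (N₀ / 2) * (2 : ℝ) ^ ((1 : ℤ) - n) * N₀ ^ (n - 2) *
        ∫ t in Set.Ioi (N₀ / 2), t ^ ((1 : ℤ) - n) * Real.exp (-t) := by
  obtain ⟨k, rfl⟩ : ∃ k, n = k + 2 := ⟨n - 2, by omega⟩
  have hk2 : k + 2 - 2 = k := by omega
  have hk1 : k + 2 - 1 = k + 1 := by omega
  have hz : (1 : ℤ) - (k + 2 : ℕ) = -((k : ℤ) + 1) := by push_cast; ring
  rw [hk2, hk1, hz]
  have hfac : (0:ℝ) < (Nat.factorial k : ℝ) := by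
    exact_mod_cast Nat.factorial_pos k
  have hLHS : ∫ x in Ioi (0:ℝ),
      x ^ k * Real.exp (-x / 2) / ((x + N₀) * 2 ^ (k + 1) * (Nat.factorial k : ℝ))
      = (∫ x in Ioi (0:ℝ), x ^ k * Real.exp (-x / 2) / (x + N₀))
          / (2 ^ (k + 1) * (Nat.factorial k : ℝ)) := by
    rw [← integral_div]
    refine setIntegral_congr_fun measurableSet_Ioi (fun x hx => ?_)
    rw [div_div]
    congr 1
    ring
  have hRHS : ∫ t in Ioi (N₀ / 2), t ^ (-((k:ℤ) + 1)) * Real.exp (-t)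
      = ∫ t in Ioi (N₀ / 2), Real.exp (-t) / t ^ (k + 1) := by
    refine setIntegral_congr_fun measurableSet_Ioi (fun t ht => ?_)
    have ht0 : (0:ℝ) < t := lt_trans (by positivity) ht
    rw [show -((k:ℤ) + 1) = -((k + 1 : ℕ) : ℤ) by push_cast; ring,
      zpow_neg, zpow_natCast]
    rw [div_eq_mul_inv, mul_comm]
  rw [hLHS, hRHS, main_lemma hN₀ k]
  rw [show ((2:ℝ) ^ (-((k:ℤ) + 1))) = ((2:ℝ) ^ (k + 1))⁻¹ by
    rw [show -((k:ℤ) + 1) = -((k + 1 : ℕ) : ℤ) by push_cast; ring, zpow_neg, zpow_natCast]]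
  field_simp
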